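/- Let F : ℝ³ × ℝ → ℝ and Ω : ℝ³ × ℝ → ℝ be C² functions and set u(x,t) = ∇ₓF(x,t). Suppose the Euler equations with potential hold: ∂ₜu(x,t) + (D_x u(x,t)) u(x,t) = ∇ₓΩ(x,t) for all (x,t). Then for each t the function x ↦ ∂ₜF(x,t) + ½ [ (∂F/∂x₁)² + (∂F/∂x₂)² + (∂F/∂x₃)² ] − Ω(x,t) has vanishing gradient on ℝ³, and hence is constant in x. -/

import Mathlib

/-- §12, end: the unsteady Bernoulli equation. For a potential flow `u = ∇ₓF`
satisfying the Euler equations with potential `Ω`, the quantity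
`∂ₜF + ½|∇F|² − Ω` has vanishing spatial gradient, hence is constant in space. -/
theorem hankel_bernoulli
    (F Ω : (Fin 3 → ℝ) → ℝ → ℝ) (u : (Fin 3 → ℝ) → ℝ → (Fin 3 → ℝ))
    (hF : ContDiff ℝ 2 (fun q : (Fin 3 → ℝ) × ℝ => F q.1 q.2))
    (hΩ : ContDiff ℝ 2 (fun q : (Fin 3 → ℝ) × ℝ => Ω q.1 q.2))
    (hu : ∀ (x : Fin 3 → ℝ) (t : ℝ) (i : Fin 3),
      u x t i = fderiv ℝ (fun y => F y t) x (Pi.single i 1))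
    (heuler : ∀ (x : Fin 3 → ℝ) (t : ℝ) (i : Fin 3),
      deriv (fun s => u x s i) t
          + ∑ j, fderiv ℝ (fun y => u y t i) x (Pi.single j 1) * u x t j
        = fderiv ℝ (fun y => Ω y t) x (Pi.single i 1)) :
    ∀ t : ℝ,
      (∀ (x : Fin 3 → ℝ) (i : Fin 3),
        fderiv ℝ (fun y => deriv (fun s => F y s) t
            + (1 / 2) * ∑ j, (fderiv ℝ (fun z => F z t) y (Pi.single j 1)) ^ 2
            - Ω y t) x (Pi.single i 1) = 0) ∧
      (∀ x x' : Fin 3 → ℝ,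
        deriv (fun s => F x s) t
            + (1 / 2) * ∑ j, (fderiv ℝ (fun z => F z t) x (Pi.single j 1)) ^ 2
            - Ω x t
          = deriv (fun s => F x' s) t
            + (1 / 2) * ∑ j, (fderiv ℝ (fun z => F z t) x' (Pi.single j 1)) ^ 2
            - Ω x' t) := by
  classical
  set Ft : (Fin 3 → ℝ) × ℝ → ℝ := fun q => F q.1 q.2 with hFt
  set Ωt : (Fin 3 → ℝ) × ℝ → ℝ := fun q => Ω q.1 q.2 with hΩt
  set Φ : (Fin 3 → ℝ) × ℝ → ((Fin 3 → ℝ) × ℝ) →L[ℝ] ℝ := fderiv ℝ Ft with hΦ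
  have hFt_diff : Differentiable ℝ Ft := hF.differentiable (by norm_num)
  have hΩt_diff : Differentiable ℝ Ωt := hΩ.differentiable (by norm_num)
  have hΦ_diff : Differentiable ℝ Φ :=
    (hF.fderiv_right (m := 1) (by norm_num)).differentiable (by norm_num)
  -- spatial slice derivative of F
  have key1 : ∀ (x : Fin 3 → ℝ) (s : ℝ) (v : Fin 3 → ℝ),
      fderiv ℝ (fun y => F y s) x v = Φ (x, s) (v, 0) := by
    intro x s v
    have h1 : HasFDerivAt (fun y : Fin 3 → ℝ => F y s)
        ((Φ (x, s)).comp (ContinuousLinearMap.inl ℝ (Fin 3 → ℝ) ℝ)) x :=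
      by exact (hFt_diff (x, s)).hasFDerivAt.comp x (hasFDerivAt_prodMk_left (𝕜 := ℝ) x s)
    rw [h1.fderiv]; rfl
  -- spatial slice derivative of Ω
  have keyΩ : ∀ (x : Fin 3 → ℝ) (s : ℝ), HasFDerivAt (fun y : Fin 3 → ℝ => Ω y s)
      ((fderiv ℝ Ωt (x, s)).comp (ContinuousLinearMap.inl ℝ (Fin 3 → ℝ) ℝ)) x := by
    intro x s
    exact (hΩt_diff (x, s)).hasFDerivAt.comp x (hasFDerivAt_prodMk_left (𝕜 := ℝ) x s)
  -- time derivative of F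
  have key2 : ∀ (x : Fin 3 → ℝ) (s : ℝ),
      deriv (fun r => F x r) s = Φ (x, s) (0, 1) := by
    intro x s
    have h1 : HasDerivAt (fun r : ℝ => ((x, r) : (Fin 3 → ℝ) × ℝ)) ((0 : Fin 3 → ℝ), (1 : ℝ)) s :=
      (hasDerivAt_const s x).prodMk (hasDerivAt_id s)
    have h2 : HasDerivAt (fun r : ℝ => F x r) (Φ (x, s) ((0 : Fin 3 → ℝ), 1)) s :=
      (hFt_diff (x, s)).hasFDerivAt.comp_hasDerivAt s h1
    exact h2.deriv
  -- spatial derivative of the derivative field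
  have key3 : ∀ (x : Fin 3 → ℝ) (s : ℝ) (w : (Fin 3 → ℝ) × ℝ),
      HasFDerivAt (fun y : Fin 3 → ℝ => Φ (y, s) w)
        ((ContinuousLinearMap.apply ℝ ℝ w).comp
          ((fderiv ℝ Φ (x, s)).comp (ContinuousLinearMap.inl ℝ (Fin 3 → ℝ) ℝ))) x := by
    intro x s w
    have h1 : HasFDerivAt (fun y : Fin 3 → ℝ => Φ (y, s))
        ((fderiv ℝ Φ (x, s)).comp (ContinuousLinearMap.inl ℝ (Fin 3 → ℝ) ℝ)) x :=
      (hΦ_diff (x, s)).hasFDerivAt.comp x (hasFDerivAt_prodMk_left x s)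
    exact ((ContinuousLinearMap.apply ℝ ℝ w).hasFDerivAt).comp x h1
  -- time derivative of the derivative field
  have key4 : ∀ (x : Fin 3 → ℝ) (s : ℝ) (w : (Fin 3 → ℝ) × ℝ),
      deriv (fun r => Φ (x, r) w) s = fderiv ℝ Φ (x, s) (0, 1) w := by
    intro x s w
    have h1 : HasDerivAt (fun r : ℝ => ((x, r) : (Fin 3 → ℝ) × ℝ)) ((0 : Fin 3 → ℝ), (1 : ℝ)) s :=
      (hasDerivAt_const s x).prodMk (hasDerivAt_id s)
    have h2 : HasDerivAt (fun r : ℝ => Φ (x, r)) (fderiv ℝ Φ (x, s) ((0 : Fin 3 → ℝ), 1)) s :=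
      (hΦ_diff (x, s)).hasFDerivAt.comp_hasDerivAt s h1
    have h3 : HasDerivAt (fun r : ℝ => Φ (x, r) w)
        ((ContinuousLinearMap.apply ℝ ℝ w) (fderiv ℝ Φ (x, s) ((0 : Fin 3 → ℝ), 1))) s :=
      ((ContinuousLinearMap.apply ℝ ℝ w).hasFDerivAt).comp_hasDerivAt s h2
    exact h3.deriv
  -- symmetry of the second derivative
  have symm : ∀ (q : (Fin 3 → ℝ) × ℝ) (v w : (Fin 3 → ℝ) × ℝ),
      fderiv ℝ Φ q v w = fderiv ℝ Φ q w v := by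
    intro q v w
    exact (hF.contDiffAt.isSymmSndFDerivAt (by simp)) v w
  intro t
  -- the Bernoulli function and its derivative
  set e : Fin 3 → (Fin 3 → ℝ) := fun i => (Pi.single i 1 : Fin 3 → ℝ) with he
  have hG : ∀ x : Fin 3 → ℝ, HasFDerivAt
      (fun y => deriv (fun s => F y s) t
        + (1 / 2) * ∑ j, (fderiv ℝ (fun z => F z t) y (Pi.single j 1)) ^ 2
        - Ω y t)
      (((ContinuousLinearMap.apply ℝ ℝ ((0 : Fin 3 → ℝ), (1:ℝ))).comp
          ((fderiv ℝ Φ (x, t)).comp (ContinuousLinearMap.inl ℝ (Fin 3 → ℝ) ℝ)))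
        + (1 / 2 : ℝ) • (∑ j, (2 * Φ (x, t) (e j, 0)) •
            ((ContinuousLinearMap.apply ℝ ℝ ((e j : Fin 3 → ℝ), (0:ℝ))).comp
              ((fderiv ℝ Φ (x, t)).comp (ContinuousLinearMap.inl ℝ (Fin 3 → ℝ) ℝ))))
        - (fderiv ℝ Ωt (x, t)).comp (ContinuousLinearMap.inl ℝ (Fin 3 → ℝ) ℝ)) x := by
    intro x
    have h1 : HasFDerivAt (fun y : Fin 3 → ℝ => deriv (fun s => F y s) t)
        ((ContinuousLinearMap.apply ℝ ℝ ((0 : Fin 3 → ℝ), (1:ℝ))).comp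
          ((fderiv ℝ Φ (x, t)).comp (ContinuousLinearMap.inl ℝ (Fin 3 → ℝ) ℝ))) x := by
      have := key3 x t ((0 : Fin 3 → ℝ), (1:ℝ))
      have heq : (fun y : Fin 3 → ℝ => deriv (fun s => F y s) t)
          = fun y : Fin 3 → ℝ => Φ (y, t) ((0 : Fin 3 → ℝ), 1) := by
        funext y; exact key2 y t
      rw [heq]; exact this
    have h2 : ∀ j : Fin 3, HasFDerivAt
        (fun y : Fin 3 → ℝ => (fderiv ℝ (fun z => F z t) y (Pi.single j 1)) ^ 2)
        ((2 * Φ (x, t) (e j, 0)) •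
          ((ContinuousLinearMap.apply ℝ ℝ ((e j : Fin 3 → ℝ), (0:ℝ))).comp
            ((fderiv ℝ Φ (x, t)).comp (ContinuousLinearMap.inl ℝ (Fin 3 → ℝ) ℝ)))) x := by
      intro j
      have heq : (fun y : Fin 3 → ℝ => (fderiv ℝ (fun z => F z t) y (Pi.single j 1)) ^ 2)
          = fun y : Fin 3 → ℝ => (Φ (y, t) (e j, 0)) * (Φ (y, t) (e j, 0)) := by
        funext y; rw [key1 y t (Pi.single j 1)]; ring
      rw [heq]
      have := (key3 x t ((e j : Fin 3 → ℝ), (0:ℝ))).fun_mul (key3 x t ((e j : Fin 3 → ℝ), (0:ℝ)))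
      refine this.congr_fderiv ?_
      ext v
      simp [two_mul, mul_comm]
      ring
    have hsum := HasFDerivAt.fun_sum (fun j (_ : j ∈ Finset.univ) => h2 j)
    have h3 := (h1.fun_add (hsum.const_mul (1/2 : ℝ)))
    have h4 := h3.fun_sub (keyΩ x t)
    convert h4 using 1
  have part1 : ∀ (x : Fin 3 → ℝ) (i : Fin 3),
      fderiv ℝ (fun y => deriv (fun s => F y s) t
          + (1 / 2) * ∑ j, (fderiv ℝ (fun z => F z t) y (Pi.single j 1)) ^ 2
          - Ω y t) x (Pi.single i 1) = 0 := by
    intro x i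
    rw [(hG x).fderiv]
    have heul := heuler x t i
    -- rewrite euler in terms of Φ
    have hu' : ∀ (y : Fin 3 → ℝ) (s : ℝ) (j : Fin 3), u y s j = Φ (y, s) (e j, 0) := by
      intro y s j; rw [hu y s j, key1]
    have e1 : deriv (fun s => u x s i) t = fderiv ℝ Φ (x, t) (0, 1) (e i, 0) := by
      have : (fun s => u x s i) = fun s => Φ (x, s) (e i, 0) := by
        funext s; exact hu' x s i
      rw [this, key4]
    have e2 : ∀ j, fderiv ℝ (fun y => u y t i) x (Pi.single j 1)
        = fderiv ℝ Φ (x, t) (e j, 0) (e i, 0) := by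
      intro j
      have : (fun y => u y t i) = fun y => Φ (y, t) (e i, 0) := by
        funext y; exact hu' y t i
      rw [this, (key3 x t ((e i : Fin 3 → ℝ), (0:ℝ))).fderiv]
      rfl
    have e3 : fderiv ℝ (fun y => Ω y t) x (Pi.single i 1)
        = (fderiv ℝ Ωt (x, t)).comp (ContinuousLinearMap.inl ℝ (Fin 3 → ℝ) ℝ) (Pi.single i 1) := by
      rw [(keyΩ x t).fderiv]
    rw [e1, e3] at heul
    simp only [e2] at heul
    simp only [ContinuousLinearMap.add_apply, ContinuousLinearMap.sub_apply,
      ContinuousLinearMap.smul_apply, ContinuousLinearMap.coe_comp', Function.comp_apply,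
      ContinuousLinearMap.inl_apply, ContinuousLinearMap.apply_apply,
      ContinuousLinearMap.sum_apply, smul_eq_mul]
    have hsymm1 : fderiv ℝ Φ (x, t) ((e i : Fin 3 → ℝ), (0:ℝ)) ((0 : Fin 3 → ℝ), 1)
        = fderiv ℝ Φ (x, t) ((0 : Fin 3 → ℝ), 1) ((e i : Fin 3 → ℝ), 0) := symm _ _ _
    have hsymm2 : ∀ j, fderiv ℝ Φ (x, t) ((e i : Fin 3 → ℝ), (0:ℝ)) ((e j : Fin 3 → ℝ), 0)
        = fderiv ℝ Φ (x, t) ((e j : Fin 3 → ℝ), (0:ℝ)) ((e i : Fin 3 → ℝ), 0) := fun j => symm _ _ _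
    rw [hsymm1]
    change _ + 1 / 2 * ∑ j, 2 * Φ (x, t) (e j, 0) * fderiv ℝ Φ (x, t) (e i, 0) (e j, 0) - _ = 0
    simp only [hsymm2]
    simp only [hu' x t] at heul
    simp only [ContinuousLinearMap.coe_comp', Function.comp_apply,
      ContinuousLinearMap.inl_apply] at heul
    rw [sub_eq_zero, ← heul]
    congr 1
    rw [Finset.mul_sum]
    apply Finset.sum_congr rfl
    intro j _
    ring
  refine ⟨part1, ?_⟩
  intro x x'
  have hdiff : Differentiable ℝ (fun y => deriv (fun s => F y s) t
      + (1 / 2) * ∑ j, (fderiv ℝ (fun z => F z t) y (Pi.single j 1)) ^ 2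
      - Ω y t) := fun y => (hG y).differentiableAt
  have hzero : ∀ y : Fin 3 → ℝ, fderiv ℝ (fun y => deriv (fun s => F y s) t
      + (1 / 2) * ∑ j, (fderiv ℝ (fun z => F z t) y (Pi.single j 1)) ^ 2
      - Ω y t) y = 0 := by
    intro y
    ext v
    have hv : v = ∑ i, (v i) • (Pi.single i 1 : Fin 3 → ℝ) := by
      funext k
      simp [Finset.sum_apply, Pi.single_apply, mul_comm]
    rw [hv]
    rw [map_sum]
    simp only [map_smul, part1 y, smul_zero, Finset.sum_const_zero,
      ContinuousLinearMap.zero_apply]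
  exact is_const_of_fderiv_eq_zero hdiff hzero x x'
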